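/- arXiv:1105.6002 — 6 statements merged into one kernel-verified Lean document; each statement's English description precedes it below -/
import Mathlib

section
/- Let k be a positive integer and let s be a complex number such that k·s is not an integer. Then the analytic continuation of Γ_{t^k} satisfies the reflection formula Γ(k(s-1)+1) · Γ(1-ks) = (π / sin(π k s)) · ∏_{i=1}^{k-1} 1/(k(s-1)+i), where Γ is the complex gamma function. (Since Γ_{t^k}(s) = Γ(k(s-1)+1) and Γ_{t^k}(1-s) = Γ(1-ks), this is the identity Γ_{t^k}(s)Γ_{t^k}(1-s) = (π/sin(πks)) ∏_{i=1}^{k-1} 1/(k(s-1)+i).) -/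
lemma gamma_shift (z : ℂ) : ∀ m : ℕ, (∀ j : ℕ, 1 ≤ j → j ≤ m → z - j ≠ 0) →
    Complex.Gamma z = (∏ j ∈ Finset.Icc 1 m, (z - j)) * Complex.Gamma (z - m) := by
  intro m
  induction m with
  | zero => simp
  | succ m ih =>
    intro h
    have h1 : z - (m + 1 : ℕ) ≠ 0 := h (m + 1) (Nat.le_add_left 1 m) le_rfl
    have h2 : Complex.Gamma (z - m) = (z - (m + 1 : ℕ)) * Complex.Gamma (z - (m + 1 : ℕ)) := by
      have := Complex.Gamma_add_one _ h1
      rw [← this]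
      congr 1
      push_cast
      ring
    rw [ih (fun j hj hjm => h j hj (hjm.trans (Nat.le_succ m))), h2,
      Finset.prod_Icc_succ_top (Nat.le_add_left 1 m)]
    ring

/-- Reflection formula for the analytic continuation of `Γ_{t^k}`:
if `k·s` is not an integer, then
`Γ(k(s-1)+1) · Γ(1-ks) = (π / sin(πks)) · ∏_{i=1}^{k-1} 1/(k(s-1)+i)`. -/
theorem gammaTk_reflection (k : ℕ) (hk : 0 < k) (s : ℂ)
    (hs : ∀ n : ℤ, (k : ℂ) * s ≠ n) :
    Complex.Gamma ((k : ℂ) * (s - 1) + 1) * Complex.Gamma (1 - (k : ℂ) * s) =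
      ((Real.pi : ℂ) / Complex.sin ((Real.pi : ℂ) * (k : ℂ) * s)) *
        ∏ i ∈ Finset.Icc 1 (k - 1), (1 / ((k : ℂ) * (s - 1) + i)) := by
  set w : ℂ := (k : ℂ) * s with hw
  have hne : ∀ j : ℕ, 1 ≤ j → j ≤ k - 1 → w - j ≠ 0 := by
    intro j _ _ h
    exact hs j (by rw [sub_eq_zero] at h; exact_mod_cast h)
  have hshift := gamma_shift w (k - 1) hne
  have hprodne : (∏ j ∈ Finset.Icc 1 (k - 1), (w - j)) ≠ 0 := by
    exact Finset.prod_ne_zero_iff.mpr fun j hj =>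
      hne j (Finset.mem_Icc.mp hj).1 (Finset.mem_Icc.mp hj).2
  have harg : (k : ℂ) * (s - 1) + 1 = w - (k - 1 : ℕ) := by
    have : ((k - 1 : ℕ) : ℂ) = (k : ℂ) - 1 := by
      push_cast [Nat.cast_sub hk]; ring
    rw [this, hw]; ring
  have hrefl := Complex.Gamma_mul_Gamma_one_sub w
  have hprod : ∏ i ∈ Finset.Icc 1 (k - 1), (1 / ((k : ℂ) * (s - 1) + i)) =
      ∏ j ∈ Finset.Icc 1 (k - 1), (1 / (w - j)) := by
    apply Finset.prod_nbij' (fun i => k - i) (fun j => k - j)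
    · intro i hi
      rw [Finset.mem_Icc] at hi ⊢
      omega
    · intro j hj
      rw [Finset.mem_Icc] at hj ⊢
      omega
    · intro i hi; rw [Finset.mem_Icc] at hi; omega
    · intro j hj; rw [Finset.mem_Icc] at hj; omega
    · intro i hi
      rw [Finset.mem_Icc] at hi
      congr 1
      have : ((k - i : ℕ) : ℂ) = (k : ℂ) - i := by
        push_cast [Nat.cast_sub (by omega : i ≤ k)]; ring
      rw [this, hw]; ring
  rw [harg, hprod]
  have hgamma : Complex.Gamma (w - (k - 1 : ℕ)) =
      Complex.Gamma w / (∏ j ∈ Finset.Icc 1 (k - 1), (w - j)) := by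
    field_simp [hshift]
    linear_combination -hshift
  rw [hgamma]
  have hsin : (Real.pi : ℂ) * (k : ℂ) * s = (Real.pi : ℂ) * w := by rw [hw]; ring
  rw [hsin, div_mul_eq_mul_div, hrefl]
  rw [Finset.prod_div_distrib] at *
  field_simp
  simp
end

section
/- For every positive integer k, the generalized gamma function satisfies the Stirling-type asymptotic: the ratio Γ_{t^k}(s+1) / (√(2π) · (ks)^{ks + 1/2} · e^{-ks}) tends to 1 as the real variable s tends to +∞. Equivalently, B(s) · Γ_{t^k}(s) is asymptotic to √(2π) (ks)^{ks+1/2} e^{-ks} as s → +∞, where B(s) = ks(ks-1)⋯(ks-(k-1)). -/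
open MeasureTheory Set Filter Real

noncomputable def fS (x : ℝ) : ℝ := Real.sqrt (2 * π) * x ^ (x + 1/2) * Real.exp (-x)

lemma fS_pos {x : ℝ} (hx : 0 < x) : 0 < fS x := by unfold fS; positivity

lemma log_fS {x : ℝ} (hx : 0 < x) :
    Real.log (fS x) = Real.log (Real.sqrt (2*π)) + (x + 1/2) * Real.log x - x := by
  unfold fS
  rw [Real.log_mul (by positivity) (by positivity), Real.log_mul (by positivity) (by positivity),
    Real.log_rpow hx, Real.log_exp]
  ring

lemma arith {n θ L M : ℝ} (hn : 1 ≤ n) (h0 : 0 ≤ θ) (h1 : θ ≤ 1) (hL0 : 0 ≤ L)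
    (hM0 : 0 ≤ M) (hLu : n*L ≤ θ) (hLl : θ ≤ (n+θ)*L) (hMu : n*M ≤ 1) :
    -(2/n) ≤ θ - (n+θ+1/2)*L ∧ θ - (n+θ+1/2)*L + θ*M ≤ 2/n := by
  have hn0 : (0:ℝ) < n := by linarith
  constructor
  · rw [← neg_div, div_le_iff₀ hn0]
    nlinarith [mul_le_mul_of_nonneg_left hLu (show (0:ℝ) ≤ n+θ+1/2 by linarith),
      sq_nonneg (1-θ)]
  · rw [le_div_iff₀ hn0]
    nlinarith [mul_le_mul_of_nonneg_left hLl hn0.le, hMu,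
      mul_nonneg hn0.le hL0, mul_nonneg hn0.le hM0,
      mul_le_mul_of_nonneg_left (mul_le_of_le_one_left hM0 h1) hn0.le]

lemma key_ineq {n θ : ℝ} (hn : 1 ≤ n) (h0 : 0 ≤ θ) (h1 : θ ≤ 1) :
    -(2/n) ≤ θ * Real.log n + ((n+1/2) * Real.log n - n) - ((n+θ+1/2) * Real.log (n+θ) - (n+θ))
    ∧ θ * Real.log (n+1) + ((n+1/2) * Real.log n - n) - ((n+θ+1/2) * Real.log (n+θ) - (n+θ))
        ≤ 2/n := by
  have hn0 : (0:ℝ) < n := by linarith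
  have hnθ : (0:ℝ) < n + θ := by linarith
  have hL0 : 0 ≤ Real.log (n+θ) - Real.log n := by
    have := Real.log_le_log hn0 (by linarith : n ≤ n + θ); linarith
  have hM0 : 0 ≤ Real.log (n+1) - Real.log n := by
    have := Real.log_le_log hn0 (by linarith : n ≤ n + 1); linarith
  have hLu : n * (Real.log (n+θ) - Real.log n) ≤ θ := by
    have h := Real.log_le_sub_one_of_pos (show (0:ℝ) < (n+θ)/n by positivity)
    rw [Real.log_div hnθ.ne' hn0.ne'] at h
    have h2 : (n+θ)/n - 1 = θ/n := by field_simp; ring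
    rw [h2] at h
    calc n * (Real.log (n+θ) - Real.log n) ≤ n * (θ/n) := by nlinarith
      _ = θ := by field_simp
  have hLl : θ ≤ (n+θ) * (Real.log (n+θ) - Real.log n) := by
    have h := Real.one_sub_inv_le_log_of_pos (show (0:ℝ) < (n+θ)/n by positivity)
    rw [Real.log_div hnθ.ne' hn0.ne'] at h
    have h2 : 1 - ((n+θ)/n)⁻¹ = θ/(n+θ) := by rw [inv_div]; field_simp; ring
    rw [h2] at h
    calc θ = (n+θ) * (θ/(n+θ)) := by field_simp
      _ ≤ (n+θ) * (Real.log (n+θ) - Real.log n) := by nlinarith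
  have hMu : n * (Real.log (n+1) - Real.log n) ≤ 1 := by
    have h := Real.log_le_sub_one_of_pos (show (0:ℝ) < (n+1)/n by positivity)
    rw [Real.log_div (by linarith : n+1 ≠ 0) hn0.ne'] at h
    have h2 : (n+1)/n - 1 = 1/n := by field_simp; ring
    rw [h2] at h
    calc n * (Real.log (n+1) - Real.log n) ≤ n * (1/n) := by nlinarith
      _ = 1 := by field_simp
  obtain ⟨c1, c2⟩ := arith hn h0 h1 hL0 hM0 hLu hLl hMu
  constructor
  · calc -(2/n) ≤ θ - (n+θ+1/2) * (Real.log (n+θ) - Real.log n) := c1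
      _ = _ := by ring
  · calc θ * Real.log (n+1) + ((n+1/2) * Real.log n - n)
          - ((n+θ+1/2) * Real.log (n+θ) - (n+θ))
        = θ - (n+θ+1/2) * (Real.log (n+θ) - Real.log n)
          + θ * (Real.log (n+1) - Real.log n) := by ring
      _ ≤ 2/n := c2

lemma logGamma_upper {N θ : ℝ} (hN : 1 ≤ N) (h0 : 0 ≤ θ) (h1 : θ ≤ 1) :
    Real.log (Real.Gamma (N + θ + 1)) ≤
      Real.log (Real.Gamma (N + 1)) + θ * Real.log (N + 1) := by
  have hx : (N:ℝ) + 1 ∈ Ioi (0:ℝ) := by simp; linarith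
  have hy : (N:ℝ) + 2 ∈ Ioi (0:ℝ) := by simp; linarith
  have hc := Real.convexOn_log_Gamma.2 hx hy (by linarith : (0:ℝ) ≤ 1 - θ) h0 (by ring)
  have harg : (1-θ) • ((N:ℝ)+1) + θ • ((N:ℝ)+2) = N + θ + 1 := by
    simp [smul_eq_mul]; ring
  rw [harg] at hc
  simp only [Function.comp_apply, smul_eq_mul] at hc
  have hΓ2 : Real.Gamma ((N:ℝ)+2) = (N+1) * Real.Gamma (N+1) := by
    have := Real.Gamma_add_one (show (N:ℝ)+1 ≠ 0 by linarith)
    rw [show (N:ℝ)+2 = (N+1)+1 by ring, this]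
  rw [hΓ2, Real.log_mul (by linarith) (Real.Gamma_pos_of_pos (by linarith)).ne'] at hc
  nlinarith [hc]

lemma logGamma_lower {N θ : ℝ} (hN : 1 ≤ N) (h0 : 0 ≤ θ) (h1 : θ ≤ 1) :
    Real.log (Real.Gamma (N + 1)) + θ * Real.log N ≤
      Real.log (Real.Gamma (N + θ + 1)) := by
  have h1θ : (0:ℝ) < 1 + θ := by linarith
  have hx : (N:ℝ) ∈ Ioi (0:ℝ) := by simp; linarith
  have hy : (N:ℝ) + 1 + θ ∈ Ioi (0:ℝ) := by simp; linarith
  have hab : θ/(1+θ) + 1/(1+θ) = 1 := by field_simp; ring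
  have hc := Real.convexOn_log_Gamma.2 hx hy (by positivity : (0:ℝ) ≤ θ/(1+θ))
    (by positivity : (0:ℝ) ≤ 1/(1+θ)) hab
  have harg : (θ/(1+θ)) • (N:ℝ) + (1/(1+θ)) • ((N:ℝ)+1+θ) = N + 1 := by
    simp only [smul_eq_mul]; field_simp; ring
  rw [harg] at hc
  simp only [Function.comp_apply, smul_eq_mul] at hc
  have hΓ1 : Real.Gamma ((N:ℝ)+1) = N * Real.Gamma N := Real.Gamma_add_one (by linarith)
  have hlog1 : Real.log (Real.Gamma ((N:ℝ)+1)) = Real.log N + Real.log (Real.Gamma N) := by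
    rw [hΓ1, Real.log_mul (by linarith) (Real.Gamma_pos_of_pos (by linarith)).ne']
  have hmul := mul_le_mul_of_nonneg_left hc h1θ.le
  have e1 : (1+θ) * (θ/(1+θ) * Real.log (Real.Gamma N)
      + 1/(1+θ) * Real.log (Real.Gamma (N+1+θ))) =
      θ * Real.log (Real.Gamma N) + Real.log (Real.Gamma (N+1+θ)) := by
    field_simp
  rw [e1] at hmul
  rw [show (N:ℝ) + θ + 1 = N + 1 + θ by ring]
  nlinarith [hmul, hlog1]

lemma fact_div_fS : Tendsto (fun n : ℕ => (n.factorial : ℝ) / fS n) atTop (nhds 1) := by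
  have hπ : (0:ℝ) < √π := by positivity
  have h := Stirling.tendsto_stirlingSeq_sqrt_pi.div_const (√π)
  rw [div_self hπ.ne'] at h
  apply h.congr'
  filter_upwards [eventually_ge_atTop 1] with n hn
  have hn0 : (0:ℝ) < n := by exact_mod_cast hn
  have hfS : fS n = √π * (Real.sqrt (2*n) * ((n:ℝ)/Real.exp 1)^n) := by
    unfold fS
    rw [Real.rpow_add hn0, Real.rpow_natCast, ← Real.sqrt_eq_rpow,
      div_pow, Real.exp_neg, ← Real.exp_one_pow,
      Real.sqrt_mul (by norm_num : (0:ℝ) ≤ 2), Real.sqrt_mul (by norm_num : (0:ℝ) ≤ 2)]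
    field_simp
  rw [Stirling.stirlingSeq, hfS]
  have h2n : (0:ℝ) < Real.sqrt (2*n) := by positivity
  have he : (0:ℝ) < ((n:ℝ)/Real.exp 1)^n := by positivity
  field_simp
lemma bounds_aux {x : ℝ} (hx : 1 ≤ x) :
    Real.log ((⌊x⌋₊.factorial : ℝ) / fS ⌊x⌋₊) - 2/((⌊x⌋₊:ℝ))
      ≤ Real.log (Real.Gamma (x+1)) - Real.log (fS x)
    ∧ Real.log (Real.Gamma (x+1)) - Real.log (fS x)
      ≤ Real.log ((⌊x⌋₊.factorial : ℝ) / fS ⌊x⌋₊) + 2/((⌊x⌋₊:ℝ)) := by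
  have hN1 : 1 ≤ ⌊x⌋₊ := Nat.le_floor (by exact_mod_cast hx)
  obtain ⟨n, hndef⟩ : ∃ n : ℝ, n = ((⌊x⌋₊ : ℕ) : ℝ) := ⟨_, rfl⟩
  rw [← hndef]
  have hn1 : (1:ℝ) ≤ n := by rw [hndef]; exact_mod_cast hN1
  have hnx : n ≤ x := by rw [hndef]; exact Nat.floor_le (by linarith)
  have hxn : x < n + 1 := by rw [hndef]; exact Nat.lt_floor_add_one x
  obtain ⟨θ, hθdef⟩ : ∃ θ : ℝ, θ = x - n := ⟨_, rfl⟩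
  have hθ0 : 0 ≤ θ := by rw [hθdef]; linarith
  have hθ1 : θ ≤ 1 := by rw [hθdef]; linarith
  have hxeq : n + θ + 1 = x + 1 := by rw [hθdef]; ring
  have hnθx : n + θ = x := by rw [hθdef]; ring
  obtain ⟨k1, k2⟩ := key_ineq hn1 hθ0 hθ1
  have glower := logGamma_lower hn1 hθ0 hθ1
  have gupper := logGamma_upper hn1 hθ0 hθ1
  rw [hxeq] at glower gupper
  have hfact : Real.Gamma (n+1) = (⌊x⌋₊.factorial : ℝ) := by
    rw [hndef]; exact_mod_cast Real.Gamma_nat_eq_factorial ⌊x⌋₊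
  have hlf : Real.log (Real.Gamma (n+1)) = Real.log ((⌊x⌋₊.factorial : ℝ)) := by rw [hfact]
  have e1 : Real.log (fS x) =
      Real.log (Real.sqrt (2*π)) + (n+θ+1/2) * Real.log (n+θ) - (n+θ) := by
    rw [hnθx]; exact log_fS (by linarith)
  have e2 : Real.log (fS n) =
      Real.log (Real.sqrt (2*π)) + (n+1/2) * Real.log n - n := log_fS (by linarith)
  have hcN : Real.log ((⌊x⌋₊.factorial : ℝ) / fS n) =
      Real.log ((⌊x⌋₊.factorial : ℝ)) - Real.log (fS n) :=
    Real.log_div (by positivity) (fS_pos (by linarith)).ne'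
  constructor <;> [linarith [glower]; linarith [gupper]]

lemma gamma_stirling :
    Tendsto (fun x : ℝ => Real.Gamma (x+1) / fS x) atTop (nhds 1) := by
  have hc : Tendsto (fun m : ℕ => Real.log ((m.factorial : ℝ) / fS m)) atTop (nhds 0) := by
    have := (Real.continuousAt_log one_ne_zero).tendsto.comp fact_div_fS
    simpa [Function.comp_def] using this
  have hfl : Tendsto (fun x : ℝ => ⌊x⌋₊) atTop atTop := tendsto_nat_floor_atTop
  have htwo : Tendsto (fun x : ℝ => 2/((⌊x⌋₊:ℝ))) atTop (nhds 0) :=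
    (tendsto_const_div_atTop_nhds_zero_nat 2).comp hfl
  have hcf : Tendsto (fun x : ℝ => Real.log ((⌊x⌋₊.factorial : ℝ) / fS ⌊x⌋₊)) atTop (nhds 0) :=
    hc.comp hfl
  have hlow : Tendsto
      (fun x : ℝ => Real.log ((⌊x⌋₊.factorial : ℝ) / fS ⌊x⌋₊) - 2/((⌊x⌋₊:ℝ)))
      atTop (nhds 0) := by simpa using hcf.sub htwo
  have hupp : Tendsto
      (fun x : ℝ => Real.log ((⌊x⌋₊.factorial : ℝ) / fS ⌊x⌋₊) + 2/((⌊x⌋₊:ℝ)))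
      atTop (nhds 0) := by simpa using hcf.add htwo
  have hsq : Tendsto (fun x : ℝ => Real.log (Real.Gamma (x+1)) - Real.log (fS x))
      atTop (nhds 0) := by
    refine tendsto_of_tendsto_of_tendsto_of_le_of_le' hlow hupp ?_ ?_
    · filter_upwards [eventually_ge_atTop (1:ℝ)] with x hx
      exact (bounds_aux hx).1
    · filter_upwards [eventually_ge_atTop (1:ℝ)] with x hx
      exact (bounds_aux hx).2
  have hexp : Tendsto
      (fun x : ℝ => Real.exp (Real.log (Real.Gamma (x+1)) - Real.log (fS x)))
      atTop (nhds 1) := by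
    have := (Real.continuous_exp.tendsto 0).comp hsq
    simpa [Function.comp_def] using this
  apply hexp.congr'
  filter_upwards [eventually_ge_atTop (1:ℝ)] with x hx
  rw [Real.exp_sub, Real.exp_log (Real.Gamma_pos_of_pos (by linarith)),
    Real.exp_log (fS_pos (by linarith))]

/-- Stirling-type asymptotic for the generalized gamma function:
`Γ_{t^k}(s+1) / (√(2π) (ks)^(ks+1/2) e^{-ks}) → 1` as `s → +∞`. -/
theorem gammaTk_stirling (k : ℕ) (hk : 0 < k) :
    Filter.Tendsto
      (fun s : ℝ =>
        (∫ t in Ioi (0:ℝ), t ^ ((k : ℝ) * s) * Real.exp (-t)) /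
          (Real.sqrt (2 * Real.pi) * ((k : ℝ) * s) ^ ((k : ℝ) * s + 1 / 2) *
            Real.exp (-((k : ℝ) * s))))
      Filter.atTop (nhds 1) := by
  have hks : Tendsto (fun s : ℝ => (k:ℝ) * s) atTop atTop :=
    (tendsto_id.const_mul_atTop (by exact_mod_cast hk : (0:ℝ) < k))
  have h := gamma_stirling.comp hks
  apply h.congr'
  filter_upwards [eventually_gt_atTop (0:ℝ)] with s hs
  have hks0 : 0 < (k:ℝ) * s := by positivity
  have hΓ : Real.Gamma ((k:ℝ) * s + 1) =
      ∫ t in Ioi (0:ℝ), t ^ ((k:ℝ) * s) * Real.exp (-t) := by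
    rw [Real.Gamma_eq_integral (by linarith)]
    refine setIntegral_congr_fun measurableSet_Ioi fun t ht => ?_
    rw [add_sub_cancel_right, mul_comm]
  simp only [Function.comp_apply, fS]
  rw [hΓ]
end

section
/- For every positive integer k and every real number s > 0, Γ_{t^k}(s+1) = k^{ks} · Γ_{1/k}(s + 1/k), i.e. ∫₀^∞ t^{ks} e^{-t} dt = k^{ks} · ∫₀^∞ ω^{(s + 1/k) - 1} e^{-k ω^{1/k}} dω. -/
open MeasureTheory Set

/-- Relation with the Díaz–Pariguan `κ`-gamma function for `κ = 1/k`: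
`Γ_{t^k}(s+1) = k^{ks} · Γ_{1/k}(s + 1/k)`. -/
theorem gammaTk_eq_kGamma (k : ℕ) (hk : 0 < k) (s : ℝ) (hs : 0 < s) :
    ∫ t in Ioi (0:ℝ), t ^ ((k : ℝ) * s) * Real.exp (-t) =
      (k : ℝ) ^ ((k : ℝ) * s) *
        ∫ ω in Ioi (0:ℝ), ω ^ ((s + 1 / (k : ℝ)) - 1) *
          Real.exp (-((k : ℝ) * ω ^ (1 / (k : ℝ)))) := by
  have hk' : (0:ℝ) < k := Nat.cast_pos.mpr hk
  have hL : ∫ t in Ioi (0:ℝ), t ^ ((k : ℝ) * s) * Real.exp (-t)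
      = Real.Gamma ((k:ℝ)*s + 1) := by
    rw [Real.Gamma_eq_integral (by positivity)]
    refine setIntegral_congr_fun measurableSet_Ioi fun x hx => ?_
    rw [add_sub_cancel_right, mul_comm]
  have hR : ∫ ω in Ioi (0:ℝ), ω ^ ((s + 1 / (k : ℝ)) - 1) *
          Real.exp (-((k : ℝ) * ω ^ (1 / (k : ℝ))))
      = (k:ℝ) ^ (-(((k:ℝ)*s + 1) )) * (k:ℝ) * Real.Gamma ((k:ℝ)*s + 1) := by
    have := integral_rpow_mul_exp_neg_mul_rpow (p := 1/(k:ℝ)) (q := s + 1/(k:ℝ) - 1)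
      (b := (k:ℝ)) (by positivity) (by nlinarith [one_div_pos.mpr hk']) hk'
    simp only [neg_mul] at this
    rw [this]
    have h1 : (s + 1/(k:ℝ) - 1 + 1) / (1/(k:ℝ)) = (k:ℝ)*s + 1 := by field_simp; ring
    have h2 : -(s + 1/(k:ℝ) - 1 + 1) / (1/(k:ℝ)) = -((k:ℝ)*s + 1) := by field_simp; ring
    rw [h1, h2, one_div_one_div]
  rw [hL, hR]
  rw [← mul_assoc, ← mul_assoc, ← Real.rpow_add hk', ← Real.rpow_add_one hk'.ne']
  rw [show (k:ℝ)*s + -((k:ℝ)*s + 1) + 1 = 0 by ring, Real.rpow_zero, one_mul]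
end

section
/- For every positive integer k and every real number s with s > 1 - 1/k and s > 0, the identity B(s) · Γ_{t^k}(s) = k^{ks} · s · Γ_{1/k}(s) holds, where B(s) = ks(ks-1)⋯(ks-(k-1)); equivalently, when B(s) ≠ 0, Γ_{t^k}(s) = (k^{ks} s / B(s)) · Γ_{1/k}(s). -/
open MeasureTheory Set

lemma prod_gamma_aux (x : ℝ) : ∀ n : ℕ, 0 < x - n + 1 →
    (∏ m ∈ Finset.range n, (x - m)) * Real.Gamma (x - n + 1) = Real.Gamma (x + 1) := by
  intro n
  induction n with
  | zero => simp
  | succ n ih =>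
    intro h
    have hxn : (0:ℝ) < x - n := by push_cast at h ⊢; linarith
    rw [Finset.prod_range_succ]
    have key : (x - n) * Real.Gamma (x - ((n:ℝ)+1) + 1) = Real.Gamma (x - n + 1) := by
      rw [show x - ((n:ℝ)+1) + 1 = x - n by ring, ← Real.Gamma_add_one hxn.ne']
    push_cast
    rw [mul_assoc, key]
    exact ih (by linarith)

/-- `B(s) · Γ_{t^k}(s) = k^{ks} · s · Γ_{1/k}(s)` with
`B(s) = ∏_{m=0}^{k-1} (ks - m)` and `Γ_{1/k}(s) = ∫₀^∞ t^{s-1} e^{-k t^{1/k}} dt`. -/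
theorem bernstein_mul_gammaTk_eq (k : ℕ) (hk : 0 < k) (s : ℝ)
    (hs1 : s > 1 - 1 / k) (hs2 : 0 < s) :
    (∏ m ∈ Finset.range k, ((k : ℝ) * s - m)) *
        ∫ t in Ioi (0:ℝ), t ^ ((k : ℝ) * (s - 1)) * Real.exp (-t) =
      (k : ℝ) ^ ((k : ℝ) * s) * s *
        ∫ t in Ioi (0:ℝ), t ^ (s - 1) * Real.exp (-((k : ℝ) * t ^ (1 / (k : ℝ)))) := by
  have hk0 : (0:ℝ) < k := Nat.cast_pos.mpr hk
  have hks : (0:ℝ) < k * s - k + 1 := by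
    have := (lt_div_iff₀ hk0).mp (by linarith : 1 - s < 1 / k)
    nlinarith
  -- first integral
  have h1 : ∫ t in Ioi (0:ℝ), t ^ ((k : ℝ) * (s - 1)) * Real.exp (-t)
      = Real.Gamma ((k:ℝ) * s - k + 1) := by
    rw [Real.Gamma_eq_integral (by linarith)]
    refine setIntegral_congr_fun measurableSet_Ioi (fun t ht => ?_)
    rw [show (k:ℝ) * s - k + 1 - 1 = k * (s - 1) by ring]
    ring
  -- second integral via substitution lemma
  have h2 : ∫ t in Ioi (0:ℝ), t ^ (s - 1) * Real.exp (-((k : ℝ) * t ^ (1 / (k : ℝ))))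
      = (k:ℝ) ^ (-((k:ℝ) * s)) * k * Real.Gamma ((k:ℝ) * s) := by
    have := integral_rpow_mul_exp_neg_mul_rpow (p := 1 / (k:ℝ)) (q := s - 1) (b := (k:ℝ))
      (by positivity) (by linarith) hk0
    simp only [neg_mul] at this
    rw [this]
    have hp : (s - 1 + 1) / (1 / (k:ℝ)) = k * s := by field_simp; ring
    rw [hp, show -(s - 1 + 1) / (1 / (k:ℝ)) = -((k:ℝ) * s) by rw [neg_div, hp],
      one_div_one_div]
  rw [h1, h2]
  have key := prod_gamma_aux ((k:ℝ) * s) k (by linarith)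
  have hB : (∏ m ∈ Finset.range k, ((k : ℝ) * s - m)) * Real.Gamma ((k:ℝ) * s - k + 1)
      = Real.Gamma ((k:ℝ) * s + 1) := key
  rw [show (k:ℝ) * s - k + 1 = (k:ℝ) * s - (k:ℕ) + 1 by norm_num] at hB
  rw [hB, Real.Gamma_add_one (by positivity)]
  have hpowc : (k:ℝ) ^ ((k:ℝ) * s) * (k:ℝ) ^ (-((k:ℝ) * s)) = 1 := by
    rw [← Real.rpow_add hk0]; simp
  calc (k:ℝ) * s * Real.Gamma ((k:ℝ) * s)
      = ((k:ℝ) ^ ((k:ℝ) * s) * (k:ℝ) ^ (-((k:ℝ) * s))) * (s * ((k:ℝ) * Real.Gamma ((k:ℝ) * s))) := by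
        rw [hpowc]; ring
    _ = (k:ℝ) ^ ((k:ℝ) * s) * s * ((k:ℝ) ^ (-((k:ℝ) * s)) * k * Real.Gamma ((k:ℝ) * s)) := by ring
end

section
/- Let k be a positive integer and let p, q be real numbers with p > 1 - 1/k and q > 1 - 1/k, and suppose B(p) ≠ 0, B(q) ≠ 0. Then the generalized beta function satisfies B_{t^k}(p,q) = (k p q / (p+q)) · (B(p+q) / (B(p)·B(q))) · Beta(kp, kq), where Beta is the Euler beta function and B(s) = ks(ks-1)⋯(ks-(k-1)). -/
open MeasureTheory Set

/-- Gamma integral with the factors in the other order. -/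
lemma gammaInt (s : ℝ) (hs : 0 < s) :
    (∫ t in Ioi (0:ℝ), t ^ (s - 1) * Real.exp (-t)) = Real.Gamma s := by
  rw [Real.Gamma_eq_integral hs]
  exact MeasureTheory.setIntegral_congr_fun measurableSet_Ioi fun x _ => mul_comm _ _

/-- `Γ(x + n) = Γ(x) ∏_{m<n} (x+m)` for `x > 0`. -/
lemma gammaAddNat (x : ℝ) (hx : 0 < x) : ∀ n : ℕ,
    Real.Gamma (x + n) = Real.Gamma x * ∏ m ∈ Finset.range n, (x + m) := by
  intro n
  induction n with
  | zero => simp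
  | succ n ih =>
    have hxn : x + (n : ℝ) ≠ 0 := by positivity
    have : (x + (n + 1 : ℕ) : ℝ) = (x + n) + 1 := by push_cast; ring
    rw [this, Real.Gamma_add_one hxn, ih, Finset.prod_range_succ]
    ring

lemma prodReflect (k : ℕ) (c : ℝ) :
    ∏ m ∈ Finset.range k, (c - m) = ∏ m ∈ Finset.range k, (c - ((k:ℝ) - 1) + m) := by
  rw [← Finset.prod_range_reflect (fun m => (c - ((k:ℝ) - 1) + m))]
  apply Finset.prod_congr rfl
  intro j hj
  have hj' : j < k := Finset.mem_range.mp hj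
  have : ((k - 1 - j : ℕ) : ℝ) = (k:ℝ) - 1 - j := by
    have : j ≤ k - 1 := by omega
    push_cast [Nat.cast_sub this, Nat.cast_sub (by omega : 1 ≤ k)]
    ring
  rw [this]; ring

/-- `Γ(ks+1) = Γ(ks-k+1) · ∏_{m<k}(ks-m)`. -/
lemma gammaShift (k : ℕ) (s : ℝ) (h : 0 < (k:ℝ) * s - k + 1) :
    Real.Gamma ((k:ℝ) * s + 1)
      = Real.Gamma ((k:ℝ) * s - k + 1) * ∏ m ∈ Finset.range k, ((k:ℝ) * s - m) := by
  have := gammaAddNat ((k:ℝ) * s - k + 1) h k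
  have he : (k:ℝ) * s - k + 1 + k = (k:ℝ) * s + 1 := by ring
  rw [he] at this
  rw [this, prodReflect k ((k:ℝ) * s)]
  congr 1
  apply Finset.prod_congr rfl
  intro m _; ring

/-- Real Euler beta integral. -/
lemma realBeta (a b : ℝ) (ha : 0 < a) (hb : 0 < b) :
    Real.Gamma a * Real.Gamma b
      = Real.Gamma (a + b) * ∫ t in (0:ℝ)..1, t ^ (a - 1) * (1 - t) ^ (b - 1) := by
  have hc := Complex.Gamma_mul_Gamma_eq_betaIntegral
      (s := (a:ℂ)) (t := (b:ℂ)) (by simpa using ha) (by simpa using hb)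
  have hbeta : Complex.betaIntegral a b
      = ((∫ t in (0:ℝ)..1, t ^ (a - 1) * (1 - t) ^ (b - 1) : ℝ) : ℂ) := by
    rw [Complex.betaIntegral, ← intervalIntegral.integral_ofReal]
    apply intervalIntegral.integral_congr
    intro x hx
    rw [Set.uIcc_of_le (by norm_num : (0:ℝ) ≤ 1)] at hx
    have hx0 : 0 ≤ x := hx.1
    have hx1 : 0 ≤ 1 - x := by linarith [hx.2]
    simp only [Complex.ofReal_mul, Complex.ofReal_cpow hx0, Complex.ofReal_cpow hx1,
      Complex.ofReal_sub, Complex.ofReal_one]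
  rw [hbeta, ← Complex.ofReal_add, Complex.Gamma_ofReal, Complex.Gamma_ofReal,
    Complex.Gamma_ofReal, ← Complex.ofReal_mul, ← Complex.ofReal_mul] at hc
  exact_mod_cast hc

/-- `B_{t^k}(p,q) = (kpq/(p+q)) · (B(p+q)/(B(p)B(q))) · Beta(kp,kq)`, where
`B_{t^k}(p,q) = Γ_{t^k}(p)Γ_{t^k}(q)/Γ_{t^k}(p+q)`, `B(s) = ∏_{m=0}^{k-1} (ks-m)`
and `Beta(x,y) = ∫₀^1 t^{x-1}(1-t)^{y-1} dt`. -/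
theorem betaTk_eq (k : ℕ) (hk : 0 < k) (p q : ℝ) (hp : p > 1 - 1 / k) (hq : q > 1 - 1 / k)
    (hBp : (∏ m ∈ Finset.range k, ((k : ℝ) * p - m)) ≠ 0)
    (hBq : (∏ m ∈ Finset.range k, ((k : ℝ) * q - m)) ≠ 0) :
    (∫ t in Ioi (0:ℝ), t ^ ((k : ℝ) * (p - 1)) * Real.exp (-t)) *
        (∫ t in Ioi (0:ℝ), t ^ ((k : ℝ) * (q - 1)) * Real.exp (-t)) /
        (∫ t in Ioi (0:ℝ), t ^ ((k : ℝ) * (p + q - 1)) * Real.exp (-t)) =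
      ((k : ℝ) * p * q / (p + q)) *
        ((∏ m ∈ Finset.range k, ((k : ℝ) * (p + q) - m)) /
          ((∏ m ∈ Finset.range k, ((k : ℝ) * p - m)) *
            (∏ m ∈ Finset.range k, ((k : ℝ) * q - m)))) *
        ∫ t in (0:ℝ)..1, t ^ ((k : ℝ) * p - 1) * (1 - t) ^ ((k : ℝ) * q - 1) := by
  have hk' : (0:ℝ) < k := by exact_mod_cast hk
  have hk1 : (1:ℝ) ≤ k := by exact_mod_cast hk
  -- positivity facts
  have hkey : (k:ℝ) * (1 - 1/k) = (k:ℝ) - 1 := by field_simp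
  have hkp2 : (k:ℝ) - 1 < (k:ℝ) * p := by
    have := mul_lt_mul_of_pos_left hp hk'; linarith
  have hkq2 : (k:ℝ) - 1 < (k:ℝ) * q := by
    have := mul_lt_mul_of_pos_left hq hk'; linarith
  have hexp : (k:ℝ) * (p + q) = (k:ℝ)*p + (k:ℝ)*q := by ring
  have hap : 0 < (k:ℝ) * p - k + 1 := by linarith
  have haq : 0 < (k:ℝ) * q - k + 1 := by linarith
  have hkp : 0 < (k:ℝ) * p := by linarith
  have hkq : 0 < (k:ℝ) * q := by linarith
  have hkpq : 0 < (k:ℝ) * (p + q) := by linarith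
  have hpq : 0 < p + q := by nlinarith [hkpq, hk']
  have hapq : 0 < (k:ℝ) * (p + q) - k + 1 := by linarith
  -- rewrite integrals as Gamma values
  have e1 : (k:ℝ) * (p - 1) = ((k:ℝ) * p - k + 1) - 1 := by ring
  have e2 : (k:ℝ) * (q - 1) = ((k:ℝ) * q - k + 1) - 1 := by ring
  have e3 : (k:ℝ) * (p + q - 1) = ((k:ℝ) * (p + q) - k + 1) - 1 := by ring
  rw [e1, e2, e3, gammaInt _ hap, gammaInt _ haq, gammaInt _ hapq]
  -- Gamma values via the shift
  have hGp := gammaShift k p hap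
  have hGq := gammaShift k q haq
  have hGpq := gammaShift k (p + q) hapq
  have hAp : Real.Gamma ((k:ℝ)*p + 1) = (k:ℝ)*p * Real.Gamma ((k:ℝ)*p) :=
    Real.Gamma_add_one hkp.ne'
  have hAq : Real.Gamma ((k:ℝ)*q + 1) = (k:ℝ)*q * Real.Gamma ((k:ℝ)*q) :=
    Real.Gamma_add_one hkq.ne'
  have hApq : Real.Gamma ((k:ℝ)*(p+q) + 1) = (k:ℝ)*(p+q) * Real.Gamma ((k:ℝ)*(p+q)) :=
    Real.Gamma_add_one hkpq.ne'
  -- Beta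
  have hbeta := realBeta ((k:ℝ)*p) ((k:ℝ)*q) hkp hkq
  have hsum : (k:ℝ)*p + (k:ℝ)*q = (k:ℝ)*(p+q) := by ring
  rw [hsum] at hbeta
  -- nonvanishing
  have hBpq : (∏ m ∈ Finset.range k, ((k : ℝ) * (p + q) - m)) ≠ 0 := by
    apply ne_of_gt
    apply Finset.prod_pos
    intro m hm
    have hm' : (m:ℝ) + 1 ≤ (k:ℝ) := by exact_mod_cast Finset.mem_range.mp hm
    linarith
  have hGpq0 : Real.Gamma ((k:ℝ)*(p+q)) ≠ 0 := (Real.Gamma_pos_of_pos hkpq).ne'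
  have hGapq0 : Real.Gamma ((k:ℝ)*(p+q) - k + 1) ≠ 0 := (Real.Gamma_pos_of_pos hapq).ne'
  -- solve for each shifted Gamma
  have fp : Real.Gamma ((k:ℝ)*p - k + 1)
      = (k:ℝ)*p * Real.Gamma ((k:ℝ)*p) / (∏ m ∈ Finset.range k, ((k : ℝ) * p - m)) := by
    rw [eq_div_iff hBp]
    rw [← hGp, hAp]
  have fq : Real.Gamma ((k:ℝ)*q - k + 1)
      = (k:ℝ)*q * Real.Gamma ((k:ℝ)*q) / (∏ m ∈ Finset.range k, ((k : ℝ) * q - m)) := by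
    rw [eq_div_iff hBq]
    rw [← hGq, hAq]
  have fpq : Real.Gamma ((k:ℝ)*(p+q) - k + 1)
      = (k:ℝ)*(p+q) * Real.Gamma ((k:ℝ)*(p+q))
        / (∏ m ∈ Finset.range k, ((k : ℝ) * (p + q) - m)) := by
    rw [eq_div_iff hBpq]
    rw [← hGpq, hApq]
  have fbeta : (∫ t in (0:ℝ)..1, t ^ ((k : ℝ) * p - 1) * (1 - t) ^ ((k : ℝ) * q - 1))
      = Real.Gamma ((k:ℝ)*p) * Real.Gamma ((k:ℝ)*q) / Real.Gamma ((k:ℝ)*(p+q)) := by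
    field_simp
    linarith [hbeta]
  rw [fp, fq, fpq, fbeta]
  field_simp
end

section
/- Let b, c, s be real numbers and let t be a real number with t² + bt + c > 0. Writing f(t) = t² + bt + c, the second derivative of the function t ↦ f(t)^s satisfies the Bernstein-type identity f(t) · (d²/dt²)[f(t)^s] - 2s(2s-1) · f(t)^s = (b² - 4c) · s(s-1) · f(t)^{s-1}. -/
lemma quad_rpow_hasDerivAt (b c : ℝ) (p : ℝ) (u : ℝ) (hu : u ^ 2 + b * u + c > 0) :
    HasDerivAt (fun x : ℝ => (x ^ 2 + b * x + c) ^ p)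
      (p * (u ^ 2 + b * u + c) ^ (p - 1) * (2 * u + b)) u := by
  have h1 : HasDerivAt (fun x : ℝ => x ^ 2 + b * x + c) (2 * u + b) u := by
    have := ((hasDerivAt_pow 2 u).add (((hasDerivAt_id u).const_mul b).add_const c))
    have e : (fun x : ℝ => x ^ 2 + b * x + c) = (fun x => x ^ 2) + fun x => b * id x + c := by
      funext x; simp only [Pi.add_apply, id_eq]; ring
    rw [e]
    refine this.congr_deriv ?_
    push_cast; ring
  have h2 := h1.rpow_const (p := p) (Or.inl (ne_of_gt hu))
  convert h2 using 1
  ring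

/-- Bernstein-type identity for the quadratic `f(t) = t² + bt + c`:
`f(t) · (d²/dt²)[f(t)^s] - 2s(2s-1) f(t)^s = (b²-4c) s(s-1) f(t)^{s-1}`. -/
theorem quadratic_bernstein_identity (b c s t : ℝ) (ht : t ^ 2 + b * t + c > 0) :
    (t ^ 2 + b * t + c) *
        iteratedDeriv 2 (fun x : ℝ => (x ^ 2 + b * x + c) ^ s) t -
      2 * s * (2 * s - 1) * (t ^ 2 + b * t + c) ^ s =
      (b ^ 2 - 4 * c) * s * (s - 1) * (t ^ 2 + b * t + c) ^ (s - 1) := by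
  have hU : IsOpen {x : ℝ | x ^ 2 + b * x + c > 0} := by
    have : Continuous fun x : ℝ => x ^ 2 + b * x + c := by continuity
    exact isOpen_lt continuous_const this
  have hev : deriv (fun x : ℝ => (x ^ 2 + b * x + c) ^ s) =ᶠ[nhds t]
      fun x : ℝ => s * ((x ^ 2 + b * x + c) ^ (s - 1) * (2 * x + b)) := by
    filter_upwards [hU.mem_nhds ht] with u hu
    have := (quad_rpow_hasDerivAt b c s u hu).deriv
    rw [this]; ring
  -- second derivative
  have hA : HasDerivAt (fun x : ℝ => (x ^ 2 + b * x + c) ^ (s - 1) * (2 * x + b))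
      (((s - 1) * (t ^ 2 + b * t + c) ^ (s - 1 - 1) * (2 * t + b)) * (2 * t + b)
        + (t ^ 2 + b * t + c) ^ (s - 1) * 2) t := by
    have hB : HasDerivAt (fun x : ℝ => 2 * x + b) 2 t := by
      simpa using ((hasDerivAt_id t).const_mul 2).add_const b
    exact (quad_rpow_hasDerivAt b c (s - 1) t ht).mul hB
  have h2 : deriv (deriv (fun x : ℝ => (x ^ 2 + b * x + c) ^ s)) t
      = s * ((((s - 1) * (t ^ 2 + b * t + c) ^ (s - 1 - 1) * (2 * t + b)) * (2 * t + b)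
        + (t ^ 2 + b * t + c) ^ (s - 1) * 2)) := by
    rw [Filter.EventuallyEq.deriv_eq hev]
    exact (hA.const_mul s).deriv
  have hit : iteratedDeriv 2 (fun x : ℝ => (x ^ 2 + b * x + c) ^ s) t
      = deriv (deriv (fun x : ℝ => (x ^ 2 + b * x + c) ^ s)) t := by
    rw [show (2 : ℕ) = 1 + 1 from rfl, iteratedDeriv_succ, iteratedDeriv_one]
  rw [hit, h2]
  have hne := ne_of_gt ht
  have e1 : (t ^ 2 + b * t + c) ^ s = (t ^ 2 + b * t + c) ^ (s - 1) * (t ^ 2 + b * t + c) := by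
    rw [show s = (s - 1) + 1 by ring, Real.rpow_add_one hne]; ring_nf
  have e2 : (t ^ 2 + b * t + c) ^ (s - 1)
      = (t ^ 2 + b * t + c) ^ (s - 1 - 1) * (t ^ 2 + b * t + c) := by
    rw [show s - 1 = (s - 1 - 1) + 1 by ring, Real.rpow_add_one hne]; ring_nf
  rw [e1, e2]
  ring
end
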